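/- arXiv:2311.00473 — 2 statements merged into one kernel-verified Lean document; each statement's English description precedes it below -/
import Mathlib

section
/- For every word w in the letters e₀, e₁ (possibly empty), the following identity holds in H[[s,t]]: ((1+e₀t)^{−1}·e₁·w ⧢ (1−e₀s)^{−1})·e₁ = (1−e₀s)^{−1} ⧢ ((1+e₀t)^{−1}·e₁·w·e₁·(1+e₀s)^{−1}). -/
/- STATEMENT 7: for every word w in e₀,e₁,
((1+e₀t)⁻¹ e₁ w ⧢ (1-e₀s)⁻¹)·e₁ = (1-e₀s)⁻¹ ⧢ ((1+e₀t)⁻¹ e₁ w e₁ (1+e₀s)⁻¹)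
in H[[s,t]], realized as H[[t]][[s]] (inner variable t, outer variable s). -/

noncomputable section

abbrev H : Type := FreeAlgebra ℚ (Fin 2)

def e0 : H := FreeAlgebra.ι ℚ 0
def e1 : H := FreeAlgebra.ι ℚ 1

/-- The word `e_{a₁}⋯e_{a_N}` of a list of letters. -/
def word (l : List (Fin 2)) : H := (l.map (FreeAlgebra.ι ℚ)).prod

/-- `H[[t]]`. -/
abbrev HT : Type := PowerSeries H
/-- `H[[s,t]] = H[[t]][[s]]`. -/
abbrev HST : Type := PowerSeries HT

/-- Embedding of `H` into `H[[s,t]]`. -/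
def embB (x : H) : HST := PowerSeries.C (R := HT) (PowerSeries.C (R := H) x)

/-- Coefficientwise (Cauchy) extension of a bilinear product on `H` to `H[[t]]`. -/
def extT (sh : H →ₗ[ℚ] H →ₗ[ℚ] H) (f g : HT) : HT :=
  PowerSeries.mk fun n => ∑ p ∈ Finset.HasAntidiagonal.antidiagonal n,
    sh (PowerSeries.coeff (R := H) p.1 f) (PowerSeries.coeff (R := H) p.2 g)

/-- Coefficientwise (Cauchy) extension of a bilinear product on `H` to `H[[s,t]]`. -/
def extST (sh : H →ₗ[ℚ] H →ₗ[ℚ] H) (f g : HST) : HST :=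
  PowerSeries.mk fun n => ∑ p ∈ Finset.HasAntidiagonal.antidiagonal n,
    extT sh (PowerSeries.coeff (R := HT) p.1 f) (PowerSeries.coeff (R := HT) p.2 g)

/-- `(1 + e₀ t)⁻¹ = ∑_n (-1)ⁿ e₀ⁿ tⁿ` in `H[[s,t]]`. -/
def invOnePlusE0T : HST := PowerSeries.C (R := HT) (PowerSeries.mk fun n => (-1 : H) ^ n * e0 ^ n)
/-- `(1 - e₀ s)⁻¹ = ∑_n e₀ⁿ sⁿ` in `H[[s,t]]`. -/
def invOneMinusE0S : HST := PowerSeries.mk fun n => PowerSeries.C (R := H) (e0 ^ n)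
/-- `(1 + e₀ s)⁻¹ = ∑_n (-1)ⁿ e₀ⁿ sⁿ` in `H[[s,t]]`. -/
def invOnePlusE0S : HST := PowerSeries.mk fun n => PowerSeries.C (R := H) ((-1 : H) ^ n * e0 ^ n)

lemma word_append (l l' : List (Fin 2)) : word (l ++ l') = word l * word l' := by
  simp [word]

lemma word_replicate (n : ℕ) : word (List.replicate n 0) = e0 ^ n := by
  simp [word, e0, List.map_replicate, List.prod_replicate]

lemma word_cons (i : Fin 2) (l : List (Fin 2)) :
    word (i :: l) = FreeAlgebra.ι ℚ i * word l := by
  simp [word]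

section
variable (sh : H →ₗ[ℚ] H →ₗ[ℚ] H)
  (hOneL : ∀ l : List (Fin 2), sh (word []) (word l) = word l)
  (hOneR : ∀ l : List (Fin 2), sh (word l) (word []) = word l)
  (hRec : ∀ (l l' : List (Fin 2)) (i j : Fin 2),
      sh (word (l ++ [i])) (word (l' ++ [j])) =
        sh (word (l ++ [i])) (word l') * FreeAlgebra.ι ℚ j
        + sh (word l) (word (l' ++ [j])) * FreeAlgebra.ι ℚ i)

include hOneL hOneR hRec in
lemma sym : ∀ n (l l' : List (Fin 2)), l.length + l'.length ≤ n →
    sh (word l) (word l') = sh (word l') (word l) := by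
  intro n
  induction n with
  | zero =>
    intro l l' h
    have hl : l = [] := by
      cases l with
      | nil => rfl
      | cons a t => simp at h
    have hl' : l' = [] := by
      cases l' with
      | nil => rfl
      | cons a t => simp at h
    subst hl hl'
    rfl
  | succ n ih =>
    intro l l' h
    rcases l.eq_nil_or_concat with rfl | ⟨a, i, rfl⟩
    · rw [hOneL, hOneR]
    rcases l'.eq_nil_or_concat with rfl | ⟨b, j, rfl⟩
    · rw [hOneL, hOneR]
    simp only [List.concat_eq_append] at h ⊢
    rw [hRec, hRec b a j i,
      ih (a ++ [i]) b (by simp at h ⊢; omega),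
      ih a (b ++ [j]) (by simp at h ⊢; omega)]
    exact add_comm _ _

include hOneL hRec in
lemma key (u : List (Fin 2)) : ∀ n : ℕ,
    (∑ j ∈ Finset.range (n+1), ((-1:ℚ)^j) •
        sh (word (List.replicate (n-j) 0)) (word (u ++ 1 :: List.replicate j 0)))
      = sh (word (List.replicate n 0)) (word u) * e1 := by
  have elist1 : ∀ k : ℕ, List.replicate (k+1) (0 : Fin 2) = List.replicate k 0 ++ [0] :=
    fun k => List.replicate_succ' ..
  have elist2 : ∀ j : ℕ, u ++ 1 :: List.replicate (j+1) (0 : Fin 2)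
      = (u ++ 1 :: List.replicate j 0) ++ [0] := by
    intro j; simp [List.replicate_succ']
  have elist3 : u ++ 1 :: List.replicate 0 (0 : Fin 2) = u ++ [1] := by simp
  set T : ℕ → ℕ → H := fun k j =>
    sh (word (List.replicate k 0)) (word (u ++ 1 :: List.replicate j 0)) with hT
  have F1 : ∀ k j, T (k+1) (j+1) = T (k+1) j * e0 + T k (j+1) * e0 := by
    intro k j
    simp only [hT]
    rw [elist1 k, elist2 j]
    simpa only [e0] using hRec (List.replicate k 0) (u ++ 1 :: List.replicate j 0) 0 0
  have F2 : ∀ j, T 0 (j+1) = T 0 j * e0 := by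
    intro j
    simp only [hT, List.replicate_zero]
    rw [hOneL, hOneL, elist2 j, word_append]
    simp [word, e0]
  have F3 : ∀ k, T (k+1) 0 = sh (word (List.replicate (k+1) 0)) (word u) * e1 + T k 0 * e0 := by
    intro k
    simp only [hT]
    rw [elist3, elist1 k]
    simpa only [e0, e1] using hRec (List.replicate k 0) u 0 1
  intro n
  induction n with
  | zero =>
    simp only [zero_add, Finset.sum_range_one, pow_zero, one_smul, Nat.sub_zero,
      List.replicate_zero]
    rw [hOneL, hOneL, word_append]
    simp [word, e1]
  | succ n ih =>
    have step : ∀ j ∈ Finset.range (n+1), T (n-j) (j+1)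
        = T (n-j) j * e0 + (if j < n then T (n-j-1) (j+1) * e0 else 0) := by
      intro j hj
      simp only [Finset.mem_range] at hj
      by_cases hjn : j < n
      · have h2 : n - j = (n - j - 1) + 1 := by omega
        rw [if_pos hjn, h2, F1]
        simp
      · have hjn' : j = n := by omega
        subst hjn'
        rw [if_neg hjn, Nat.sub_self, F2, add_zero]
    have hA : (∑ j ∈ Finset.range (n+1), (-((-1:ℚ)^j)) • (T (n-j) j * e0))
        = -((∑ j ∈ Finset.range (n+1), ((-1:ℚ)^j) • T (n-j) j) * e0) := by
      rw [Finset.sum_mul, ← Finset.sum_neg_distrib]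
      simp only [neg_smul, smul_mul_assoc]
    have hB : (∑ j ∈ Finset.range (n+1),
          (-((-1:ℚ)^j)) • (if j < n then T (n-j-1) (j+1) * e0 else 0))
        = (∑ j ∈ Finset.range (n+1), ((-1:ℚ)^j) • T (n-j) j) * e0 - T n 0 * e0 := by
      rw [Finset.sum_range_succ, if_neg (lt_irrefl n), smul_zero, add_zero,
        Finset.sum_mul, Finset.sum_range_succ']
      simp only [pow_zero, one_smul, Nat.sub_zero]
      rw [add_sub_cancel_right]
      refine Finset.sum_congr rfl fun j hj => ?_
      simp only [Finset.mem_range] at hj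
      have hidx : n - j - 1 = n - (j+1) := by omega
      rw [if_pos hj, hidx, smul_mul_assoc]
      congr 1
      ring
    calc (∑ j ∈ Finset.range (n+1+1), ((-1:ℚ)^j) • T (n+1-j) j)
        = (∑ j ∈ Finset.range (n+1), ((-1:ℚ)^(j+1)) • T (n-j) (j+1)) + T (n+1) 0 := by
          rw [Finset.sum_range_succ']
          simp [Nat.succ_sub_succ_eq_sub]
      _ = (∑ j ∈ Finset.range (n+1),
            ((-((-1:ℚ)^j)) • (T (n-j) j * e0)
              + (-((-1:ℚ)^j)) • (if j < n then T (n-j-1) (j+1) * e0 else 0)))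
          + T (n+1) 0 := by
          refine congrArg (· + T (n+1) 0) (Finset.sum_congr rfl fun j hj => ?_)
          rw [step j hj, smul_add]
          ring_nf
      _ = sh (word (List.replicate (n+1) 0)) (word u) * e1 := by
          rw [Finset.sum_add_distrib, hA, hB, F3 n]
          abel
end

theorem stmt_7
    (sh : H →ₗ[ℚ] H →ₗ[ℚ] H)
    (hOneL : ∀ l : List (Fin 2), sh (word []) (word l) = word l)
    (hOneR : ∀ l : List (Fin 2), sh (word l) (word []) = word l)
    (hRec : ∀ (l l' : List (Fin 2)) (i j : Fin 2),
      sh (word (l ++ [i])) (word (l' ++ [j])) =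
        sh (word (l ++ [i])) (word l') * FreeAlgebra.ι ℚ j
        + sh (word l) (word (l' ++ [j])) * FreeAlgebra.ι ℚ i) :
    ∀ l : List (Fin 2),
      extST sh (invOnePlusE0T * embB e1 * embB (word l)) invOneMinusE0S * embB e1
        = extST sh invOneMinusE0S
            (invOnePlusE0T * embB e1 * embB (word l) * embB e1 * invOnePlusE0S) := by
  have clps2 : ∀ (z : H) (F : HT) (m : ℕ),
      (∑ q ∈ Finset.HasAntidiagonal.antidiagonal m,
        sh (PowerSeries.coeff (R := H) q.1 (PowerSeries.C (R := H) z)) (PowerSeries.coeff (R := H) q.2 F))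
      = sh z (PowerSeries.coeff (R := H) m F) := by
    intro z F m
    rw [Finset.sum_eq_single (0, m)]
    · simp [PowerSeries.coeff_C]
    · rintro ⟨a, b⟩ hp hne
      rw [Finset.HasAntidiagonal.mem_antidiagonal] at hp
      have ha : a ≠ 0 := by rintro rfl; exact hne (by simp at hp; simp [hp])
      simp [PowerSeries.coeff_C, ha]
    · intro hn; exact absurd (Finset.HasAntidiagonal.mem_antidiagonal.2 (by simp)) hn
  have clps3 : ∀ (z : H) (F : HT) (m : ℕ),
      (∑ q ∈ Finset.HasAntidiagonal.antidiagonal m,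
        sh (PowerSeries.coeff (R := H) q.1 F) (PowerSeries.coeff (R := H) q.2 (PowerSeries.C (R := H) z)))
      = sh (PowerSeries.coeff (R := H) m F) z := by
    intro z F m
    rw [Finset.sum_eq_single (m, 0)]
    · simp [PowerSeries.coeff_C]
    · rintro ⟨a, b⟩ hp hne
      rw [Finset.HasAntidiagonal.mem_antidiagonal] at hp
      have hb : b ≠ 0 := by rintro rfl; exact hne (by simp at hp; simp [hp])
      simp [PowerSeries.coeff_C, hb]
    · intro hn; exact absurd (Finset.HasAntidiagonal.mem_antidiagonal.2 (by simp)) hn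
  have extT_zero_left : ∀ g : HT, extT sh 0 g = 0 := by
    intro g
    ext k
    simp [extT]
  have clps1 : ∀ (Z : HT) (F : HST) (n : ℕ),
      (∑ p ∈ Finset.HasAntidiagonal.antidiagonal n,
        extT sh (PowerSeries.coeff (R := HT) p.1 (PowerSeries.C (R := HT) Z)) (PowerSeries.coeff (R := HT) p.2 F))
      = extT sh Z (PowerSeries.coeff (R := HT) n F) := by
    intro Z F n
    rw [Finset.sum_eq_single (0, n)]
    · simp [PowerSeries.coeff_C]
    · rintro ⟨a, b⟩ hp hne
      rw [Finset.HasAntidiagonal.mem_antidiagonal] at hp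
      have ha : a ≠ 0 := by rintro rfl; exact hne (by simp at hp; simp [hp])
      simp [PowerSeries.coeff_C, ha, extT_zero_left]
    · intro hn; exact absurd (Finset.HasAntidiagonal.mem_antidiagonal.2 (by simp)) hn
  have hneg : ∀ (k : ℕ) (a : H), (-1 : H) ^ k * a = ((-1 : ℚ) ^ k) • a := by
    intro k a
    rw [Algebra.smul_def, map_pow, map_neg, map_one]
  intro l
  set Y : HT := (PowerSeries.mk fun m => (-1 : H) ^ m * e0 ^ m)
      * PowerSeries.C (R := H) (e1 * word l) with hYdef
  have hY : invOnePlusE0T * embB e1 * embB (word l) = PowerSeries.C (R := HT) Y := by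
    rw [invOnePlusE0T, embB, embB, hYdef, mul_assoc, ← map_mul, ← map_mul, ← map_mul]
  set Z : HT := Y * PowerSeries.C (R := H) e1 with hZdef
  have hZ : PowerSeries.C (R := HT) Y * embB e1 = PowerSeries.C (R := HT) Z := by
    rw [embB, hZdef, ← map_mul]
  have hYcoeff : ∀ k : ℕ, PowerSeries.coeff (R := H) k Y = (-1 : H) ^ k * e0 ^ k * (e1 * word l) := by
    intro k
    rw [hYdef, PowerSeries.coeff_mul_C, PowerSeries.coeff_mk]
  have hZcoeff : ∀ k : ℕ,
      PowerSeries.coeff (R := H) k Z = (-1 : H) ^ k * e0 ^ k * (e1 * word l) * e1 := by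
    intro k
    rw [hZdef, PowerSeries.coeff_mul_C, hYcoeff]
  rw [hY, hZ]
  refine PowerSeries.ext fun n => ?_
  refine PowerSeries.ext fun m => ?_
  have hLHS : PowerSeries.coeff (R := H) m (PowerSeries.coeff (R := HT) n
        (extST sh (PowerSeries.C (R := HT) Y) invOneMinusE0S * embB e1))
      = sh ((-1 : H) ^ m * e0 ^ m * (e1 * word l)) (e0 ^ n) * e1 := by
    rw [embB, PowerSeries.coeff_mul_C]
    simp only [extST, PowerSeries.coeff_mk]
    rw [clps1]
    simp only [invOneMinusE0S, PowerSeries.coeff_mk]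
    rw [PowerSeries.coeff_mul_C]
    simp only [extT, PowerSeries.coeff_mk]
    rw [clps3, hYcoeff]
  have hRHS : PowerSeries.coeff (R := H) m (PowerSeries.coeff (R := HT) n
        (extST sh invOneMinusE0S (PowerSeries.C (R := HT) Z * invOnePlusE0S)))
      = ∑ p ∈ Finset.HasAntidiagonal.antidiagonal n,
          sh (e0 ^ p.1)
            ((-1 : H) ^ m * e0 ^ m * (e1 * word l) * e1 * ((-1 : H) ^ p.2 * e0 ^ p.2)) := by
    simp only [extST, PowerSeries.coeff_mk, map_sum]
    refine Finset.sum_congr rfl fun p hp => ?_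
    rw [PowerSeries.coeff_C_mul]
    simp only [invOneMinusE0S, invOnePlusE0S, PowerSeries.coeff_mk]
    simp only [extT, PowerSeries.coeff_mk]
    rw [clps2, PowerSeries.coeff_mul_C, hZcoeff]
  rw [hLHS, hRHS]
  -- now the pure algebra identity
  set u : List (Fin 2) := List.replicate m 0 ++ 1 :: l with hu
  have hwu : word u = e0 ^ m * (e1 * word l) := by
    rw [hu, word_append, word_cons, word_replicate]
    rfl
  have hwuj : ∀ j : ℕ, word (u ++ 1 :: List.replicate j 0)
      = e0 ^ m * (e1 * word l) * e1 * e0 ^ j := by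
    intro j
    rw [word_append, hwu, word_cons, word_replicate]
    simp only [mul_assoc]
    rfl
  have hkey2 : (∑ p ∈ Finset.HasAntidiagonal.antidiagonal n,
        ((-1 : ℚ) ^ p.2) • sh (e0 ^ p.1) (word (u ++ 1 :: List.replicate p.2 0)))
      = sh (word (List.replicate n 0)) (word u) * e1 := by
    rw [Finset.Nat.sum_antidiagonal_eq_sum_range_succ_mk,
      ← key sh hOneL hRec u n, ← Finset.sum_range_reflect]
    refine Finset.sum_congr rfl fun i hi => ?_
    simp only [Finset.mem_range] at hi
    have h1 : n + 1 - 1 - i = n - i := by omega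
    have h2 : n - (n - i) = i := by omega
    rw [h1, h2, word_replicate]
  calc sh ((-1 : H) ^ m * e0 ^ m * (e1 * word l)) (e0 ^ n) * e1
      = ((-1 : ℚ) ^ m) • (sh (word u) (e0 ^ n) * e1) := by
        rw [mul_assoc, hneg, ← hwu, map_smul, LinearMap.smul_apply, smul_mul_assoc]
    _ = ((-1 : ℚ) ^ m) • (sh (word (List.replicate n 0)) (word u) * e1) := by
        rw [← word_replicate n,
          sym sh hOneL hOneR hRec (u.length + (List.replicate n (0 : Fin 2)).length) u
            (List.replicate n 0) le_rfl]
    _ = ((-1 : ℚ) ^ m) • (∑ p ∈ Finset.HasAntidiagonal.antidiagonal n,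
          ((-1 : ℚ) ^ p.2) • sh (e0 ^ p.1) (word (u ++ 1 :: List.replicate p.2 0))) := by
        rw [hkey2]
    _ = ∑ p ∈ Finset.HasAntidiagonal.antidiagonal n,
          sh (e0 ^ p.1)
            ((-1 : H) ^ m * e0 ^ m * (e1 * word l) * e1 * ((-1 : H) ^ p.2 * e0 ^ p.2)) := by
        rw [Finset.smul_sum]
        refine Finset.sum_congr rfl fun p hp => ?_
        rw [hwuj, hneg p.2, mul_smul_comm, mul_assoc ((-1 : H) ^ m), hneg m, smul_mul_assoc,
          smul_mul_assoc, map_smul, map_smul]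
        exact smul_comm _ _ _
end
end

section
/- For every τ ∈ ℚ one has S^τ ∘ L^{s,t,τ} = L^{s,t,0} ∘ S^τ as ℚ-linear maps H → H[[s,t]]. Here S^τ is the ℚ-algebra endomorphism of H with S^τ(e₀) = e₀, S^τ(e₁) = e₁ + τe₀ (extended coefficientwise to H[[s,t]]); A^τ is the ℚ-algebra endomorphism of H with A^τ(e₀) = e₀, A^τ(e₁) = τe₀; H is the ℚ-linear endomorphism of H defined on words by H(1) = 0, H(e₀·w) = 0 and H(e₁·w) = w; and L^{s,t,τ} : H → H[[s,t]] is the ℚ-linear map L^{s,t,τ}(w) = w − A^τ(w) − ∑_{j≥0} e₀^j·(e₁ + (1−τ)e₀)·H(w)·t^j − ∑_{j≥0} H(w)·(e₁ + (1−τ)e₀)·e₀^j·s^j. -/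
/- STATEMENT 10: S^τ ∘ L^{s,t,τ} = L^{s,t,0} ∘ S^τ : H → H[[s,t]], where
S^τ(e₀)=e₀, S^τ(e₁)=e₁+τe₀; A^τ(e₀)=e₀, A^τ(e₁)=τe₀; H(1)=0, H(e₀w)=0, H(e₁w)=w; and
L^{s,t,τ}(w) = w − A^τ(w) − ∑_j e₀^j (e₁+(1−τ)e₀) H(w) t^j − ∑_j H(w)(e₁+(1−τ)e₀) e₀^j s^j.
H[[s,t]] is realized as H[[t]][[s]] (inner variable t, outer variable s). -/

set_option maxRecDepth 4000

noncomputable section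

/-- The ℚ-algebra endomorphism `S^τ` of `H`: `e₀ ↦ e₀`, `e₁ ↦ e₁ + τ e₀`. -/
def Stau (τ : ℚ) : H →ₐ[ℚ] H :=
  FreeAlgebra.lift ℚ (fun i : Fin 2 => if i = 0 then e0 else e1 + τ • e0)

/-- The ℚ-algebra endomorphism `A^τ` of `H`: `e₀ ↦ e₀`, `e₁ ↦ τ e₀`. -/
def Atau (τ : ℚ) : H →ₐ[ℚ] H :=
  FreeAlgebra.lift ℚ (fun i : Fin 2 => if i = 0 then e0 else τ • e0)

/-- The coefficientwise extension of `S^τ` to `H[[s,t]]`. -/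
def StauST (τ : ℚ) : HST →+* HST :=
  PowerSeries.map (PowerSeries.map (Stau τ).toRingHom)

/-- The map `L^{s,t,τ}`, built from a linear map `HH` playing the role of `H`. -/
def Lstt (HH : H →ₗ[ℚ] H) (τ : ℚ) (w : H) : HST :=
  embB w - embB (Atau τ w)
    - PowerSeries.C (R := HT) (PowerSeries.mk fun j => e0 ^ j * (e1 + (1 - τ) • e0) * HH w)
    - PowerSeries.mk (fun j => PowerSeries.C (R := H) (HH w * (e1 + (1 - τ) • e0) * e0 ^ j))

lemma Stau_e0 (τ : ℚ) : Stau τ e0 = e0 := by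
  simp [Stau, e0, FreeAlgebra.lift_ι_apply]

lemma Stau_e1 (τ : ℚ) : Stau τ e1 = e1 + τ • e0 := by
  simp [Stau, e1, FreeAlgebra.lift_ι_apply]

lemma decomp (x : H) : ∃ c a b, x = algebraMap ℚ H c + e0 * a + e1 * b := by
  induction x using FreeAlgebra.induction with
  | grade0 r => exact ⟨r, 0, 0, by simp⟩
  | grade1 i =>
    fin_cases i
    · exact ⟨0, 1, 0, by simp [e0]⟩
    · exact ⟨0, 0, 1, by simp [e1]⟩
  | mul x y hx hy =>
    obtain ⟨c, a, b, rfl⟩ := hx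
    obtain ⟨c', a', b', rfl⟩ := hy
    refine ⟨c * c',
      c • a' + a * (algebraMap ℚ H c' + e0 * a' + e1 * b'),
      c • b' + b * (algebraMap ℚ H c' + e0 * a' + e1 * b'), ?_⟩
    simp only [map_mul, add_mul, mul_add, mul_smul_comm, smul_add, ← Algebra.smul_def,
      mul_assoc]
    abel
  | add x y hx hy =>
    obtain ⟨c, a, b, rfl⟩ := hx
    obtain ⟨c', a', b', rfl⟩ := hy
    exact ⟨c + c', a + a', b + b', by rw [map_add, mul_add, mul_add]; abel⟩

lemma HH_alg (HH : H →ₗ[ℚ] H) (hH1 : HH 1 = 0) (c : ℚ) : HH (algebraMap ℚ H c) = 0 := by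
  rw [Algebra.algebraMap_eq_smul_one, map_smul, hH1, smul_zero]

lemma Stau_HH (τ : ℚ) (HH : H →ₗ[ℚ] H) (hH1 : HH 1 = 0)
    (hH0 : ∀ w : H, HH (e0 * w) = 0) (hHe1 : ∀ w : H, HH (e1 * w) = w) (x : H) :
    HH (Stau τ x) = Stau τ (HH x) := by
  obtain ⟨c, a, b, rfl⟩ := decomp x
  have h1 : HH (algebraMap ℚ H c + e0 * a + e1 * b) = b := by
    rw [map_add, map_add, HH_alg HH hH1, hH0, hHe1, zero_add, zero_add]
  have h2 : Stau τ (algebraMap ℚ H c + e0 * a + e1 * b)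
      = algebraMap ℚ H c + e0 * Stau τ a + (e1 * Stau τ b + τ • (e0 * Stau τ b)) := by
    rw [map_add, map_add, map_mul, map_mul, Stau_e0, Stau_e1, AlgHom.commutes,
      add_mul, smul_mul_assoc]
  rw [h1, h2, map_add, map_add, map_add, HH_alg HH hH1, hH0, hHe1, map_smul, hH0,
    smul_zero, zero_add, zero_add, add_zero]

lemma Atau0_Stau (τ : ℚ) (x : H) : Atau 0 (Stau τ x) = Stau τ (Atau τ x) := by
  have h : (Atau 0).comp (Stau τ) = (Stau τ).comp (Atau τ) := by
    apply FreeAlgebra.hom_ext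
    funext i
    fin_cases i <;>
      simp [Atau, Stau, e0, e1, FreeAlgebra.lift_ι_apply]
  exact DFunLike.congr_fun h x

lemma StauST_embB (τ : ℚ) (w : H) : StauST τ (embB w) = embB (Stau τ w) := by
  simp [StauST, embB, PowerSeries.map_C]

lemma StauST_Cmk (τ : ℚ) (f : ℕ → H) :
    StauST τ (PowerSeries.C (R := HT) (PowerSeries.mk f)) =
      PowerSeries.C (R := HT) (PowerSeries.mk fun j => Stau τ (f j)) := by
  rw [StauST, PowerSeries.map_C]
  refine congrArg _ ?_
  ext n
  simp [PowerSeries.coeff_map]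

lemma StauST_mkC (τ : ℚ) (g : ℕ → H) :
    StauST τ (PowerSeries.mk fun n => PowerSeries.C (R := H) (g n)) =
      PowerSeries.mk fun n => PowerSeries.C (R := H) (Stau τ (g n)) := by
  ext n
  simp [StauST, PowerSeries.coeff_map, PowerSeries.map_C]

theorem stmt_10 (τ : ℚ)
    (HH : H →ₗ[ℚ] H)
    (hH1 : HH 1 = 0)
    (hH0 : ∀ w : H, HH (e0 * w) = 0)
    (hHe1 : ∀ w : H, HH (e1 * w) = w) :
    ∀ x : H, StauST τ (Lstt HH τ x) = Lstt HH 0 (Stau τ x) := by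
  intro x
  have hHx : HH (Stau τ x) = Stau τ (HH x) := Stau_HH τ HH hH1 hH0 hHe1 x
  have hmid : Stau τ (e1 + (1 - τ) • e0) = e1 + (1 - (0:ℚ)) • e0 := by
    rw [map_add, map_smul, Stau_e1, Stau_e0, sub_zero, one_smul, add_assoc, ← add_smul]
    norm_num
  have hf : ∀ j : ℕ, Stau τ (e0 ^ j * (e1 + (1 - τ) • e0) * HH x) =
      e0 ^ j * (e1 + (1 - (0:ℚ)) • e0) * HH (Stau τ x) := by
    intro j
    rw [map_mul, map_mul, map_pow, Stau_e0, hmid, hHx]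
  have hg : ∀ j : ℕ, Stau τ (HH x * (e1 + (1 - τ) • e0) * e0 ^ j) =
      HH (Stau τ x) * (e1 + (1 - (0:ℚ)) • e0) * e0 ^ j := by
    intro j
    rw [map_mul, map_mul, map_pow, Stau_e0, hmid, hHx]
  unfold Lstt
  rw [map_sub, map_sub, map_sub, StauST_embB, StauST_embB, StauST_Cmk, StauST_mkC,
    ← Atau0_Stau]
  simp only [hf, hg]
end
end
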